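/- If τ is a permutation such that P(τ) contains no 123-chain, then P(τ) has a linear extension that avoids the pattern 123. -/

import Mathlib

/-- A permutation of length `n` (a bijection of `{0, …, n-1}`, identified with the
sequence of its values), packaged with its length. -/
abbrev PermSig : Type := Σ n : ℕ, Equiv.Perm (Fin n)

/-- Pattern containment: the permutation `α` of length `k` is contained in the
permutation `τ` of length `n` if there is an increasing choice of positions on which
`τ` is order-isomorphic to `α`. -/
def Contains {k n : ℕ} (α : Equiv.Perm (Fin k)) (τ : Equiv.Perm (Fin n)) : Prop :=
  ∃ f : Fin k ↪o Fin n, ∀ i j : Fin k, α i < α j ↔ τ (f i) < τ (f j)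

/-- The avoidance class `Av B`: all permutations containing no member of `B`. -/
def Av (B : Set PermSig) : Set PermSig :=
  {τ : PermSig | ∀ β ∈ B, ¬ Contains β.2 τ.2}

/-- A pattern class: a set of permutations downward closed under pattern containment. -/
def IsPatternClass (C : Set PermSig) : Prop :=
  ∀ (k n : ℕ) (α : Equiv.Perm (Fin k)) (τ : Equiv.Perm (Fin n)),
    Contains α τ → (⟨n, τ⟩ : PermSig) ∈ C → (⟨k, α⟩ : PermSig) ∈ C

/-- The base relation of the poset `P(τ)` on values: `x ≺ y` whenever `x` appears
before `y` in `τ` and either `x > y`, or some value `z` appears between `x` and `y`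
in `τ` with `x < y < z`. -/
def PQBase {n : ℕ} (τ : Equiv.Perm (Fin n)) (x y : Fin n) : Prop :=
  τ.symm x < τ.symm y ∧
    (y < x ∨ ∃ z : Fin n, τ.symm x < τ.symm z ∧ τ.symm z < τ.symm y ∧ x < y ∧ y < z)

/-- The poset `P(τ)`: the transitive closure of the base relation. -/
def PQ {n : ℕ} (τ : Equiv.Perm (Fin n)) : Fin n → Fin n → Prop :=
  Relation.TransGen (PQBase τ)

/-- `σ` is a linear extension of `P(τ)`; equivalently, `(σ, τ)` is an allowable pair,
i.e. a priority queue can produce output `τ` from input `σ`. -/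
def Allowable {n : ℕ} (σ τ : Equiv.Perm (Fin n)) : Prop :=
  ∀ x y : Fin n, PQ τ x y → σ.symm x < σ.symm y

/-- `C𝒜`: the set of permutations obtainable by a priority queue from an input in `C`. -/
def ImageA (C : Set PermSig) : Set PermSig :=
  {τ : PermSig | ∃ σ : Equiv.Perm (Fin τ.1), (⟨τ.1, σ⟩ : PermSig) ∈ C ∧ Allowable σ τ.2}

/-- `P(τ)` has an `α`-chain: values `a 0 ≺ a 1 ≺ … ≺ a (k-1)` forming a chain of
`P(τ)` whose pattern is `α`. -/
def HasChain {k n : ℕ} (α : Equiv.Perm (Fin k)) (τ : Equiv.Perm (Fin n)) : Prop :=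
  ∃ a : Fin k → Fin n,
    (∀ i j : Fin k, i < j → PQ τ (a i) (a j)) ∧
    (∀ i j : Fin k, a i < a j ↔ α i < α j)

/-- The pattern `123` (written 0-indexed). -/
noncomputable def p123 : Equiv.Perm (Fin 3) :=
  Equiv.ofBijective (![0, 1, 2] : Fin 3 → Fin 3) (by decide)

section Aux

variable {n : ℕ}

theorem pq_pos {τ : Equiv.Perm (Fin n)} {x y : Fin n} (h : PQ τ x y) :
    τ.symm x < τ.symm y := by
  induction h with
  | single h => exact h.1
  | tail _ h ih => exact ih.trans h.1

theorem pq_asymm {τ : Equiv.Perm (Fin n)} {x y : Fin n} (h : PQ τ x y) : ¬ PQ τ y x :=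
  fun h' => lt_irrefl _ ((pq_pos h).trans (pq_pos h'))

theorem base_interval {τ : Equiv.Perm (Fin n)} {x y z : Fin n} (h : PQBase τ x y)
    (hxz : x < z) (hzy : z < y) : PQBase τ x z ∨ PQBase τ z y := by
  obtain ⟨hpos, hcase⟩ := h
  rcases hcase with hlt | ⟨w, hw1, hw2, hxy, hyw⟩
  · exact absurd (hxz.trans hzy) (not_lt.2 hlt.le)
  · have hzw : z ≠ w := ne_of_lt (hzy.trans hyw)
    have hposzw : τ.symm z ≠ τ.symm w := fun e => hzw (τ.symm.injective e)
    rcases lt_or_gt_of_ne hposzw with hpzw | hpzw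
    · exact Or.inr ⟨hpzw.trans hw2, Or.inr ⟨w, hpzw, hw2, hzy, hyw⟩⟩
    · exact Or.inl ⟨hw1.trans hpzw, Or.inr ⟨w, hw1, hpzw, hxz, hzy.trans hyw⟩⟩

theorem pq_interval {τ : Equiv.Perm (Fin n)} {x y : Fin n} (h : PQ τ x y) :
    ∀ z, x < z → z < y → PQ τ x z ∨ PQ τ z y := by
  induction h with
  | single h =>
    intro z h1 h2
    rcases base_interval h h1 h2 with h' | h'
    · exact Or.inl (Relation.TransGen.single h')
    · exact Or.inr (Relation.TransGen.single h')
  | @tail m y hxm hmy ih =>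
    intro z h1 h2
    rcases lt_trichotomy z m with hzm | hzm | hzm
    · rcases ih z h1 hzm with h' | h'
      · exact Or.inl h'
      · exact Or.inr (h'.tail hmy)
    · subst hzm; exact Or.inl hxm
    · rcases base_interval hmy hzm h2 with h' | h'
      · exact Or.inl (hxm.tail h')
      · exact Or.inr (Relation.TransGen.single h')

/-- The total order: `PQ` when comparable; larger value first when incomparable. -/
def rel (τ : Equiv.Perm (Fin n)) (x y : Fin n) : Prop :=
  PQ τ x y ∨ (¬ PQ τ x y ∧ ¬ PQ τ y x ∧ y < x)

theorem rel_trich (τ : Equiv.Perm (Fin n)) :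
    ∀ x y : Fin n, rel τ x y ∨ x = y ∨ rel τ y x := by
    intro x y
    rcases eq_or_ne x y with rfl | hne
    · exact Or.inr (Or.inl rfl)
    · by_cases h1 : PQ τ x y
      · exact Or.inl (Or.inl h1)
      · by_cases h2 : PQ τ y x
        · exact Or.inr (Or.inr (Or.inl h2))
        · rcases hne.lt_or_gt with hlt | hlt
          · exact Or.inr (Or.inr (Or.inr ⟨h2, h1, hlt⟩))
          · exact Or.inl (Or.inr ⟨h1, h2, hlt⟩)

theorem rel_irrefl (τ : Equiv.Perm (Fin n)) : ∀ x, ¬ rel τ x x := by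
  intro x hx
  rcases hx with h | ⟨_, _, h⟩
  · exact pq_asymm h h
  · exact lt_irrefl _ h

theorem rel_trans (τ : Equiv.Perm (Fin n)) :
    ∀ x y z : Fin n, rel τ x y → rel τ y z → rel τ x z := by
  intro x y z hxy hyz
  -- first x ≠ z
  rcases eq_or_ne x z with rfl | hxz
  · exfalso
    rcases hxy with h | ⟨h1, h2, h3⟩
    · rcases hyz with h' | ⟨h1', h2', h3'⟩
      · exact pq_asymm h h'
      · exact h2' h
    · rcases hyz with h' | ⟨h1', h2', h3'⟩
      · exact h2 h'
      · exact lt_irrefl _ (h3.trans h3')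
  rcases hxy with h | ⟨hnxy, hnyx, hyx⟩
  · rcases hyz with h' | ⟨hnyz, hnzy, hzy⟩
    · exact Or.inl (h.trans h')
    · by_cases hpq : PQ τ x z
      · exact Or.inl hpq
      · have hnzx : ¬ PQ τ z x := fun hzx => hnzy (hzx.trans h)
        have hzx : z < x := by
          rcases hxz.lt_or_gt with hlt | hlt
          · rcases pq_interval h z hlt hzy with h'' | h''
            · exact absurd h'' hpq
            · exact absurd h'' hnzy
          · exact hlt
        exact Or.inr ⟨hpq, hnzx, hzx⟩
  · rcases hyz with h' | ⟨hnyz, hnzy, hzy⟩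
    · by_cases hpq : PQ τ x z
      · exact Or.inl hpq
      · have hnzx : ¬ PQ τ z x := fun hzx => hnyx (h'.trans hzx)
        have hzx : z < x := by
          rcases hxz.lt_or_gt with hlt | hlt
          · rcases pq_interval h' x hyx hlt with h'' | h''
            · exact absurd h'' hnyx
            · exact absurd h'' hpq
          · exact hlt
        exact Or.inr ⟨hpq, hnzx, hzx⟩
    · have hzx : z < x := hzy.trans hyx
      by_cases hpq : PQ τ x z
      · exact Or.inl hpq
      · have hnzx : ¬ PQ τ z x := by
          intro hzx'
          rcases pq_interval hzx' y hzy hyx with h'' | h''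
          · exact hnzy h''
          · exact hnyx h''
        exact Or.inr ⟨hpq, hnzx, hzx⟩

theorem rel_sto (τ : Equiv.Perm (Fin n)) : IsStrictTotalOrder (Fin n) (rel τ) :=
  { trichotomous := fun a b h1 h2 => ((rel_trich τ a b).resolve_left h1).resolve_right h2
    irrefl := rel_irrefl τ
    trans := rel_trans τ }

/-- A copy of `Fin n`, to carry the linear order given by `rel τ`. -/
def Copy {n : ℕ} (_τ : Equiv.Perm (Fin n)) : Type := Fin n

instance {n : ℕ} (τ : Equiv.Perm (Fin n)) : Fintype (Copy τ) :=
  inferInstanceAs (Fintype (Fin n))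

noncomputable instance {n : ℕ} (τ : Equiv.Perm (Fin n)) : LinearOrder (Copy τ) :=
  @linearOrderOfSTO (Fin n) (rel τ) (rel_sto τ) (Classical.decRel _)

theorem copy_lt {n : ℕ} {τ : Equiv.Perm (Fin n)} {a b : Copy τ} :
    a < b ↔ rel τ a b := Iff.rfl

theorem copy_card {n : ℕ} (τ : Equiv.Perm (Fin n)) : Fintype.card (Copy τ) = n :=
  Fintype.card_fin n

theorem p123_lt : ∀ i j : Fin 3, p123 i < p123 j ↔ i < j := by
  decide

end Aux

/-- If `P(τ)` contains no `123`-chain then it has a `123`-avoiding linear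
extension. -/
theorem no_chain_123_linear_extension {n : ℕ} (τ : Equiv.Perm (Fin n)) (h : ¬ HasChain p123 τ) :
    ∃ σ : Equiv.Perm (Fin n), Allowable σ τ ∧ ¬ Contains p123 σ := by
  classical
  let e : Fin n ≃o Copy τ := monoEquivOfFin (Copy τ) (copy_card τ)
  let σ : Equiv.Perm (Fin n) := e.toEquiv
  have key : ∀ x y : Fin n, σ.symm x < σ.symm y ↔ rel τ x y := by
    intro x y
    exact (OrderIso.lt_iff_lt e.symm).trans copy_lt
  refine ⟨σ, ?_, ?_⟩
  · intro x y hxy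
    exact (key x y).2 (Or.inl hxy)
  · rintro ⟨f, hf⟩
    have hrel : ∀ i j : Fin 3, i < j → rel τ (σ (f i)) (σ (f j)) := by
      intro i j hij
      apply (key _ _).1
      rw [Equiv.symm_apply_apply, Equiv.symm_apply_apply]
      exact f.strictMono hij
    have hpq : ∀ i j : Fin 3, i < j → PQ τ (σ (f i)) (σ (f j)) := by
      intro i j hij
      have hlt : σ (f i) < σ (f j) := (hf i j).1 ((p123_lt i j).2 hij)
      rcases hrel i j hij with h' | ⟨_, _, h'⟩
      · exact h'
      · exact absurd hlt (lt_asymm h')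
    have hxy : σ (f 0) < σ (f 1) := (hf 0 1).1 ((p123_lt 0 1).2 (by decide))
    have hyz : σ (f 1) < σ (f 2) := (hf 1 2).1 ((p123_lt 1 2).2 (by decide))
    have hxz : σ (f 0) < σ (f 2) := hxy.trans hyz
    have hpxy : PQ τ (σ (f 0)) (σ (f 1)) := hpq 0 1 (by decide)
    have hpyz : PQ τ (σ (f 1)) (σ (f 2)) := hpq 1 2 (by decide)
    have hpxz : PQ τ (σ (f 0)) (σ (f 2)) := hpq 0 2 (by decide)
    apply h
    refine ⟨![σ (f 0), σ (f 1), σ (f 2)], ?_, ?_⟩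
    · intro i j hij
      fin_cases i <;> fin_cases j <;>
        first
          | exact absurd hij (by decide)
          | exact hpxy | exact hpxz | exact hpyz
    · intro i j
      rw [p123_lt]
      fin_cases i <;> fin_cases j <;>
        first
          | exact iff_of_false (lt_irrefl _) (by decide)
          | exact iff_of_true hxy (by decide)
          | exact iff_of_true hyz (by decide)
          | exact iff_of_true hxz (by decide)
          | exact iff_of_false (lt_asymm hxy) (by decide)
          | exact iff_of_false (lt_asymm hyz) (by decide)
          | exact iff_of_false (lt_asymm hxz) (by decide)
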